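/- (Ehrenfeucht–Fraïssé game for hornALC_∇.) For any finite vocabulary τ, any τ-structures 𝔄, 𝔅 with a ∈ dom(𝔄), b ∈ dom(𝔅), and any natural number ℓ: 𝔄,a ≤^ℓ_{hornALC_∇} 𝔅,b if and only if 𝔄,{a} ⪯^ℓ_{horn_∇} 𝔅,b. Moreover, if 𝔄 and 𝔅 are finite, then 𝔄,a ≤_{hornALC_∇} 𝔅,b if and only if 𝔄,{a} ⪯_{horn_∇} 𝔅,b. -/

import Mathlib

/-- A τ-structure over domain `D`, for a vocabulary with concept names `Con`
(unary predicates) and role names `Rol` (binary predicates). -/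
structure Str (Con Rol : Type) (D : Type) where
  conI : Con → Set D
  rolI : Rol → Set (D × D)

/-- ALC-concepts over the vocabulary `(Con, Rol)`. -/
inductive ALC (Con Rol : Type) where
  | top : ALC Con Rol
  | bot : ALC Con Rol
  | atomic : Con → ALC Con Rol
  | neg : ALC Con Rol → ALC Con Rol
  | disj : ALC Con Rol → ALC Con Rol → ALC Con Rol
  | conj : ALC Con Rol → ALC Con Rol → ALC Con Rol
  | impl : ALC Con Rol → ALC Con Rol → ALC Con Rol
  | ex : Rol → ALC Con Rol → ALC Con Rol
  | all : Rol → ALC Con Rol → ALC Con Rol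

variable {Con Rol D D1 D2 : Type}

/-- The extension `C^𝔄` of an ALC-concept in a structure. -/
def ALC.sem (M : Str Con Rol D) : ALC Con Rol → Set D
  | .top => Set.univ
  | .bot => ∅
  | .atomic A => M.conI A
  | .neg C => (C.sem M)ᶜ
  | .disj C C' => C.sem M ∪ C'.sem M
  | .conj C C' => C.sem M ∩ C'.sem M
  | .impl C C' => (C.sem M)ᶜ ∪ C'.sem M
  | .ex R C => {a | ∃ b, (a, b) ∈ M.rolI R ∧ b ∈ C.sem M}
  | .all R C => {a | ∀ b, (a, b) ∈ M.rolI R → b ∈ C.sem M}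

/-- The depth of an ALC-concept: maximal nesting of `∃R` and `∀R`. -/
def ALC.depth : ALC Con Rol → ℕ
  | .top | .bot | .atomic _ => 0
  | .neg C => C.depth
  | .disj C C' | .conj C C' | .impl C C' => max C.depth C'.depth
  | .ex _ C | .all _ C => C.depth + 1

/-- ELU-concepts: built from concept names and ⊤ using ⊓, ⊔ and ∃R only. -/
inductive ALC.IsELU : ALC Con Rol → Prop
  | top : IsELU .top
  | atomic (A : Con) : IsELU (.atomic A)
  | conj {C C' : ALC Con Rol} : IsELU C → IsELU C' → IsELU (.conj C C')
  | disj {C C' : ALC Con Rol} : IsELU C → IsELU C' → IsELU (.disj C C')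
  | ex (R : Rol) {C : ALC Con Rol} : IsELU C → IsELU (.ex R C)

/-- hornALC-concepts: `H ::= ⊥ | ⊤ | A | H⊓H' | L→H | ∃R.H | ∀R.H` with `L` an ELU-concept. -/
inductive ALC.IsHorn : ALC Con Rol → Prop
  | bot : IsHorn .bot
  | top : IsHorn .top
  | atomic (A : Con) : IsHorn (.atomic A)
  | conj {H H' : ALC Con Rol} : IsHorn H → IsHorn H' → IsHorn (.conj H H')
  | impl {L H : ALC Con Rol} : IsELU L → IsHorn H → IsHorn (.impl L H)
  | ex (R : Rol) {H : ALC Con Rol} : IsHorn H → IsHorn (.ex R H)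
  | all (R : Rol) {H : ALC Con Rol} : IsHorn H → IsHorn (.all R H)

/-- `S` is a simulation between `M` and `N`. -/
def IsSim (M : Str Con Rol D1) (N : Str Con Rol D2) (S : Set (D1 × D2)) : Prop :=
  ∀ a b, (a, b) ∈ S →
    (∀ A, a ∈ M.conI A → b ∈ N.conI A) ∧
    (∀ R a', (a, a') ∈ M.rolI R → ∃ b', (b, b') ∈ N.rolI R ∧ (a', b') ∈ S)

/-- `𝔄,a ⪯_sim 𝔅,b`: some simulation contains `(a,b)`. -/
def Sim (M : Str Con Rol D1) (N : Str Con Rol D2) (a : D1) (b : D2) : Prop :=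
  ∃ S, IsSim M N S ∧ (a, b) ∈ S

/-- The ℓ-round simulation relations `⪯^ℓ_sim`. -/
def SimL (M : Str Con Rol D1) (N : Str Con Rol D2) : ℕ → D1 → D2 → Prop
  | 0 => fun a b => ∀ A, a ∈ M.conI A → b ∈ N.conI A
  | ℓ + 1 => fun a b =>
      (∀ A, a ∈ M.conI A → b ∈ N.conI A) ∧
      ∀ R a', (a, a') ∈ M.rolI R → ∃ b', (b, b') ∈ N.rolI R ∧ SimL M N ℓ a' b'

/-- `X R↑ Y`. -/
def relUp (R : Set (D1 × D1)) (X Y : Set D1) : Prop := ∀ a ∈ X, ∃ b ∈ Y, (a, b) ∈ R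

/-- `X R↓ Y`. -/
def relDown (R : Set (D1 × D1)) (X Y : Set D1) : Prop := ∀ b ∈ Y, ∃ a ∈ X, (a, b) ∈ R

/-- `Z` is a Horn simulation between `M` and `N`. -/
def IsHornSim (M : Str Con Rol D1) (N : Str Con Rol D2) (Z : Set (Set D1 × D2)) : Prop :=
  ∀ X b, (X, b) ∈ Z →
    X.Nonempty ∧
    (∀ A, X ⊆ M.conI A → b ∈ N.conI A) ∧
    (∀ R Y, relUp (M.rolI R) X Y →
        ∃ Y', Y' ⊆ Y ∧ ∃ b', (b, b') ∈ N.rolI R ∧ (Y', b') ∈ Z) ∧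
    (∀ R b', (b, b') ∈ N.rolI R → ∃ Y, relDown (M.rolI R) X Y ∧ (Y, b') ∈ Z) ∧
    (∀ a ∈ X, Sim N M b a)

/-- `𝔄,X ⪯_horn 𝔅,b`: some Horn simulation contains `(X,b)`. -/
def HornSim (M : Str Con Rol D1) (N : Str Con Rol D2) (X : Set D1) (b : D2) : Prop :=
  ∃ Z, IsHornSim M N Z ∧ (X, b) ∈ Z

/-- The ℓ-round Horn simulation relations `⪯^ℓ_horn`. -/
def HornSimL (M : Str Con Rol D1) (N : Str Con Rol D2) : ℕ → Set D1 → D2 → Prop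
  | 0 => fun X b =>
      X.Nonempty ∧ (∀ A, X ⊆ M.conI A → b ∈ N.conI A) ∧ ∀ a ∈ X, SimL N M 0 b a
  | ℓ + 1 => fun X b =>
      (X.Nonempty ∧ (∀ A, X ⊆ M.conI A → b ∈ N.conI A) ∧ ∀ a ∈ X, SimL N M 0 b a) ∧
      (∀ R Y, relUp (M.rolI R) X Y →
          ∃ Y', Y' ⊆ Y ∧ ∃ b', (b, b') ∈ N.rolI R ∧ HornSimL M N ℓ Y' b') ∧
      (∀ R b', (b, b') ∈ N.rolI R → ∃ Y, relDown (M.rolI R) X Y ∧ HornSimL M N ℓ Y b') ∧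
      (∀ a ∈ X, SimL N M (ℓ + 1) b a)

/-- `𝔄,X ≤^ℓ_hornALC 𝔅,b`. -/
def leHornDepth (M : Str Con Rol D1) (N : Str Con Rol D2) (ℓ : ℕ) (X : Set D1) (b : D2) : Prop :=
  ∀ C : ALC Con Rol, C.IsHorn → C.depth ≤ ℓ → X ⊆ C.sem M → b ∈ C.sem N

/-- `𝔄,X ≤_hornALC 𝔅,b`. -/
def leHorn (M : Str Con Rol D1) (N : Str Con Rol D2) (X : Set D1) (b : D2) : Prop :=
  ∀ C : ALC Con Rol, C.IsHorn → X ⊆ C.sem M → b ∈ C.sem N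

/-- `𝔄,a ≤^ℓ_ELU 𝔅,b`. -/
def leELUDepth (M : Str Con Rol D1) (N : Str Con Rol D2) (ℓ : ℕ) (a : D1) (b : D2) : Prop :=
  ∀ C : ALC Con Rol, C.IsELU → C.depth ≤ ℓ → a ∈ C.sem M → b ∈ C.sem N

/-- `𝔄,a ≤_ELU 𝔅,b`. -/
def leELU (M : Str Con Rol D1) (N : Str Con Rol D2) (a : D1) (b : D2) : Prop :=
  ∀ C : ALC Con Rol, C.IsELU → a ∈ C.sem M → b ∈ C.sem N

/-- ELU_∇-concepts: built from concept names and ⊤ using ⊓, ⊔, ∃R and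
`∇R.C = ∃R.⊤ ⊓ ∀R.C`. -/
inductive ALC.IsELUNabla : ALC Con Rol → Prop
  | top : IsELUNabla .top
  | atomic (A : Con) : IsELUNabla (.atomic A)
  | conj {C C' : ALC Con Rol} : IsELUNabla C → IsELUNabla C' → IsELUNabla (.conj C C')
  | disj {C C' : ALC Con Rol} : IsELUNabla C → IsELUNabla C' → IsELUNabla (.disj C C')
  | ex (R : Rol) {C : ALC Con Rol} : IsELUNabla C → IsELUNabla (.ex R C)
  | nabla (R : Rol) {C : ALC Con Rol} :
      IsELUNabla C → IsELUNabla (.conj (.ex R .top) (.all R C))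

/-- hornALC_∇-concepts: like hornALC-concepts, but with ELU_∇-concepts on the left of →. -/
inductive ALC.IsHornNabla : ALC Con Rol → Prop
  | bot : IsHornNabla .bot
  | top : IsHornNabla .top
  | atomic (A : Con) : IsHornNabla (.atomic A)
  | conj {H H' : ALC Con Rol} : IsHornNabla H → IsHornNabla H' → IsHornNabla (.conj H H')
  | impl {L H : ALC Con Rol} : IsELUNabla L → IsHornNabla H → IsHornNabla (.impl L H)
  | ex (R : Rol) {H : ALC Con Rol} : IsHornNabla H → IsHornNabla (.ex R H)
  | all (R : Rol) {H : ALC Con Rol} : IsHornNabla H → IsHornNabla (.all R H)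

/-- `Z` is an ELU_∇-simulation between `M` and `N`. -/
def IsNablaSim (M : Str Con Rol D1) (N : Str Con Rol D2) (Z : Set (D1 × D2)) : Prop :=
  ∀ a b, (a, b) ∈ Z →
    (∀ A, a ∈ M.conI A → b ∈ N.conI A) ∧
    (∀ R a', (a, a') ∈ M.rolI R → ∃ b', (b, b') ∈ N.rolI R ∧ (a', b') ∈ Z) ∧
    (∀ R b', (∃ a', (a, a') ∈ M.rolI R) → (b, b') ∈ N.rolI R →
      ∃ a', (a, a') ∈ M.rolI R ∧ (a', b') ∈ Z)

/-- `𝔄,a ⪯_∇ 𝔅,b`: some ELU_∇-simulation contains `(a,b)`. -/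
def NablaSim (M : Str Con Rol D1) (N : Str Con Rol D2) (a : D1) (b : D2) : Prop :=
  ∃ Z, IsNablaSim M N Z ∧ (a, b) ∈ Z

/-- The ℓ-round ELU_∇-simulation relations `⪯^ℓ_∇`. -/
def NablaSimL (M : Str Con Rol D1) (N : Str Con Rol D2) : ℕ → D1 → D2 → Prop
  | 0 => fun a b => ∀ A, a ∈ M.conI A → b ∈ N.conI A
  | ℓ + 1 => fun a b =>
      (∀ A, a ∈ M.conI A → b ∈ N.conI A) ∧
      (∀ R a', (a, a') ∈ M.rolI R → ∃ b', (b, b') ∈ N.rolI R ∧ NablaSimL M N ℓ a' b') ∧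
      (∀ R b', (∃ a', (a, a') ∈ M.rolI R) → (b, b') ∈ N.rolI R →
        ∃ a', (a, a') ∈ M.rolI R ∧ NablaSimL M N ℓ a' b')

/-- `Z` is a Horn_∇ simulation between `M` and `N`: a Horn simulation whose simulation
condition uses ELU_∇-simulations. -/
def IsHornNablaSim (M : Str Con Rol D1) (N : Str Con Rol D2) (Z : Set (Set D1 × D2)) :
    Prop :=
  ∀ X b, (X, b) ∈ Z →
    X.Nonempty ∧
    (∀ A, X ⊆ M.conI A → b ∈ N.conI A) ∧
    (∀ R Y, relUp (M.rolI R) X Y →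
        ∃ Y', Y' ⊆ Y ∧ ∃ b', (b, b') ∈ N.rolI R ∧ (Y', b') ∈ Z) ∧
    (∀ R b', (b, b') ∈ N.rolI R → ∃ Y, relDown (M.rolI R) X Y ∧ (Y, b') ∈ Z) ∧
    (∀ a ∈ X, NablaSim N M b a)

/-- `𝔄,X ⪯_{horn_∇} 𝔅,b`: some Horn_∇ simulation contains `(X,b)`. -/
def HornNablaSim (M : Str Con Rol D1) (N : Str Con Rol D2) (X : Set D1) (b : D2) : Prop :=
  ∃ Z, IsHornNablaSim M N Z ∧ (X, b) ∈ Z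

/-- The ℓ-round Horn_∇ simulation relations `⪯^ℓ_{horn_∇}`. -/
def HornNablaSimL (M : Str Con Rol D1) (N : Str Con Rol D2) : ℕ → Set D1 → D2 → Prop
  | 0 => fun X b =>
      X.Nonempty ∧ (∀ A, X ⊆ M.conI A → b ∈ N.conI A) ∧ ∀ a ∈ X, NablaSimL N M 0 b a
  | ℓ + 1 => fun X b =>
      (X.Nonempty ∧ (∀ A, X ⊆ M.conI A → b ∈ N.conI A) ∧ ∀ a ∈ X, NablaSimL N M 0 b a) ∧
      (∀ R Y, relUp (M.rolI R) X Y →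
          ∃ Y', Y' ⊆ Y ∧ ∃ b', (b, b') ∈ N.rolI R ∧ HornNablaSimL M N ℓ Y' b') ∧
      (∀ R b', (b, b') ∈ N.rolI R → ∃ Y, relDown (M.rolI R) X Y ∧ HornNablaSimL M N ℓ Y b') ∧
      (∀ a ∈ X, NablaSimL N M (ℓ + 1) b a)

/-- `𝔄,a ≤^ℓ_{hornALC_∇} 𝔅,b`. -/
def leHornNablaDepth (M : Str Con Rol D1) (N : Str Con Rol D2) (ℓ : ℕ) (a : D1) (b : D2) :
    Prop :=
  ∀ C : ALC Con Rol, C.IsHornNabla → C.depth ≤ ℓ → a ∈ C.sem M → b ∈ C.sem N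

/-- `𝔄,a ≤_{hornALC_∇} 𝔅,b`. -/
def leHornNabla (M : Str Con Rol D1) (N : Str Con Rol D2) (a : D1) (b : D2) : Prop :=
  ∀ C : ALC Con Rol, C.IsHornNabla → a ∈ C.sem M → b ∈ C.sem N

noncomputable section

attribute [local instance] Classical.propDecidable

namespace EFAux

variable {Con Rol E F : Type}

/-- Big conjunction of a list of concepts. -/
def bigConj (l : List (ALC Con Rol)) : ALC Con Rol := l.foldr .conj .top

lemma mem_bigConj {S : Str Con Rol E} {l : List (ALC Con Rol)} {x : E} :
    x ∈ (bigConj l).sem S ↔ ∀ C ∈ l, x ∈ C.sem S := by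
  induction l with
  | nil => simp [bigConj, ALC.sem]
  | cons C l ih =>
      simp only [bigConj, List.foldr] at ih ⊢
      simp only [ALC.sem, Set.mem_inter_iff, ih, List.mem_cons]
      constructor
      · rintro ⟨h1, h2⟩ D (rfl | hD); exact h1; exact h2 _ hD
      · intro h; exact ⟨h _ (Or.inl rfl), fun D hD => h _ (Or.inr hD)⟩

lemma depth_bigConj_le {l : List (ALC Con Rol)} {n : ℕ}
    (h : ∀ C ∈ l, ALC.depth C ≤ n) : (bigConj l).depth ≤ n := by
  induction l with
  | nil => simp [bigConj, ALC.depth]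
  | cons C l ih =>
      simp only [bigConj, List.foldr, ALC.depth, max_le_iff]
      exact ⟨h _ (List.mem_cons_self), ih fun D hD => h _ (List.mem_cons_of_mem _ hD)⟩

lemma isHorn_bigConj {l : List (ALC Con Rol)}
    (h : ∀ C ∈ l, ALC.IsHornNabla C) : (bigConj l).IsHornNabla := by
  induction l with
  | nil => exact .top
  | cons C l ih =>
      exact .conj (h _ (List.mem_cons_self)) (ih fun D hD => h _ (List.mem_cons_of_mem _ hD))

lemma isELU_bigConj {l : List (ALC Con Rol)}
    (h : ∀ C ∈ l, ALC.IsELUNabla C) : (bigConj l).IsELUNabla := by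
  induction l with
  | nil => exact .top
  | cons C l ih =>
      exact .conj (h _ (List.mem_cons_self)) (ih fun D hD => h _ (List.mem_cons_of_mem _ hD))

lemma mem_foldr_disj {S : Str Con Rol E} {l : List (ALC Con Rol)} {c : ALC Con Rol} {x : E} :
    x ∈ (l.foldr .disj c).sem S ↔ x ∈ c.sem S ∨ ∃ C ∈ l, x ∈ C.sem S := by
  induction l with
  | nil => simp
  | cons C l ih =>
      simp only [List.foldr, ALC.sem, Set.mem_union, ih, List.mem_cons]
      constructor
      · rintro (h | h | ⟨D, hD, h⟩)
        · exact Or.inr ⟨C, Or.inl rfl, h⟩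
        · exact Or.inl h
        · exact Or.inr ⟨D, Or.inr hD, h⟩
      · rintro (h | ⟨D, (rfl | hD), h⟩)
        · exact Or.inr (Or.inl h)
        · exact Or.inl h
        · exact Or.inr (Or.inr ⟨D, hD, h⟩)

lemma depth_foldr_disj_le {l : List (ALC Con Rol)} {c : ALC Con Rol} {n : ℕ}
    (hc : c.depth ≤ n) (h : ∀ C ∈ l, ALC.depth C ≤ n) : (l.foldr .disj c).depth ≤ n := by
  induction l with
  | nil => exact hc
  | cons C l ih =>
      simp only [List.foldr, ALC.depth, max_le_iff]
      exact ⟨h _ (List.mem_cons_self), ih fun D hD => h _ (List.mem_cons_of_mem _ hD)⟩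

lemma isELU_foldr_disj {l : List (ALC Con Rol)} {c : ALC Con Rol}
    (hc : c.IsELUNabla) (h : ∀ C ∈ l, ALC.IsELUNabla C) : (l.foldr .disj c).IsELUNabla := by
  induction l with
  | nil => exact hc
  | cons C l ih =>
      exact .disj (h _ (List.mem_cons_self)) (ih fun D hD => h _ (List.mem_cons_of_mem _ hD))

/-! ### ELU∇ types -/

/-- Depth-`n` ELU∇ types over the vocabulary. -/
def Ty (Con Rol : Type) : ℕ → Type :=
  fun n => Nat.rec (Con → Bool) (fun _ ih => (Con → Bool) × (Rol → ih → Bool)) n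

def tyFintype [Fintype Con] [Fintype Rol] : (n : ℕ) → Fintype (Ty Con Rol n)
  | 0 => by
      letI : DecidableEq Con := Classical.decEq _
      exact inferInstanceAs (Fintype (Con → Bool))
  | n + 1 => by
      letI : DecidableEq Con := Classical.decEq _
      letI : DecidableEq Rol := Classical.decEq _
      letI : Fintype (Ty Con Rol n) := tyFintype n
      letI : DecidableEq (Ty Con Rol n) := Classical.decEq _
      exact inferInstanceAs (Fintype ((Con → Bool) × (Rol → Ty Con Rol n → Bool)))

attribute [local instance] tyFintype

/-- The depth-`n` type of an element of a structure. -/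
def typD (S : Str Con Rol E) : (n : ℕ) → E → Ty Con Rol n
  | 0 => fun x A => decide (x ∈ S.conI A)
  | n + 1 => fun x =>
      ⟨fun A => decide (x ∈ S.conI A),
       fun R t => decide (∃ x', (x, x') ∈ S.rolI R ∧ typD S n x' = t)⟩

lemma typD_zero_eq {S : Str Con Rol E} {x : E} {A : Con} :
    typD S 0 x A = true ↔ x ∈ S.conI A := by simp [typD]

lemma typD_succ_fst {S : Str Con Rol E} {n : ℕ} {x : E} {A : Con} :
    (typD S (n + 1) x).1 A = true ↔ x ∈ S.conI A := by simp [typD]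

lemma typD_succ_snd {S : Str Con Rol E} {n : ℕ} {x : E} {R : Rol} {t : Ty Con Rol n} :
    (typD S (n + 1) x).2 R t = true ↔ ∃ x', (x, x') ∈ S.rolI R ∧ typD S n x' = t := by
  simp [typD]

/-- The simulation preorder on depth-`n` types. -/
def tyLe : (n : ℕ) → Ty Con Rol n → Ty Con Rol n → Prop
  | 0 => fun t s => ∀ A, t A = true → s A = true
  | n + 1 => fun t s =>
      (∀ A, t.1 A = true → s.1 A = true) ∧
      (∀ R t', t.2 R t' = true → ∃ s', s.2 R s' = true ∧ tyLe n t' s') ∧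
      (∀ R s', (∃ t', t.2 R t' = true) → s.2 R s' = true →
        ∃ t', t.2 R t' = true ∧ tyLe n t' s')

lemma tyLe_zero {t s : Ty Con Rol 0} :
    tyLe 0 t s ↔ ∀ A, t A = true → s A = true := Iff.rfl

lemma tyLe_succ {n : ℕ} {t s : Ty Con Rol (n + 1)} :
    tyLe (n + 1) t s ↔
      (∀ A, t.1 A = true → s.1 A = true) ∧
      (∀ R t', t.2 R t' = true → ∃ s', s.2 R s' = true ∧ tyLe n t' s') ∧
      (∀ R s', (∃ t', t.2 R t' = true) → s.2 R s' = true →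
        ∃ t', t.2 R t' = true ∧ tyLe n t' s') := Iff.rfl

lemma tyLe_refl : ∀ (n : ℕ) (t : Ty Con Rol n), tyLe n t t
  | 0, _ => fun _ h => h
  | n + 1, t =>
      ⟨fun _ h => h, fun R t' h => ⟨t', h, tyLe_refl n t'⟩,
        fun R s' _ h => ⟨s', h, tyLe_refl n s'⟩⟩

lemma nablaSimL_zero {S1 : Str Con Rol E} {S2 : Str Con Rol F} {x : E} {y : F} :
    NablaSimL S1 S2 0 x y ↔ ∀ A, x ∈ S1.conI A → y ∈ S2.conI A := Iff.rfl

lemma nablaSimL_succ {S1 : Str Con Rol E} {S2 : Str Con Rol F} {n : ℕ} {x : E} {y : F} :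
    NablaSimL S1 S2 (n + 1) x y ↔
      (∀ A, x ∈ S1.conI A → y ∈ S2.conI A) ∧
      (∀ R x', (x, x') ∈ S1.rolI R →
        ∃ y', (y, y') ∈ S2.rolI R ∧ NablaSimL S1 S2 n x' y') ∧
      (∀ R y', (∃ x', (x, x') ∈ S1.rolI R) → (y, y') ∈ S2.rolI R →
        ∃ x', (x, x') ∈ S1.rolI R ∧ NablaSimL S1 S2 n x' y') := Iff.rfl

/-- The `n`-round simulation relation is captured by the type preorder. -/
lemma nablaSimL_iff_tyLe {S1 : Str Con Rol E} {S2 : Str Con Rol F} :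
    ∀ (n : ℕ) (x : E) (y : F),
      NablaSimL S1 S2 n x y ↔ tyLe n (typD S1 n x) (typD S2 n y) := by
  intro n
  induction n with
  | zero =>
      intro x y
      rw [nablaSimL_zero, tyLe_zero]
      constructor
      · intro h A hA; exact typD_zero_eq.2 (h A (typD_zero_eq.1 hA))
      · intro h A hA; exact typD_zero_eq.1 (h A (typD_zero_eq.2 hA))
  | succ n ih =>
      intro x y
      rw [nablaSimL_succ, tyLe_succ]
      constructor
      · rintro ⟨hA, hforth, hback⟩
        refine ⟨?_, ?_, ?_⟩
        · intro A h; exact typD_succ_fst.2 (hA A (typD_succ_fst.1 h))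
        · intro R t' ht'
          obtain ⟨x', hx', rfl⟩ := typD_succ_snd.1 ht'
          obtain ⟨y', hy', hsim⟩ := hforth R x' hx'
          exact ⟨typD S2 n y', typD_succ_snd.2 ⟨y', hy', rfl⟩, (ih x' y').1 hsim⟩
        · intro R s' hex hs'
          obtain ⟨y', hy', rfl⟩ := typD_succ_snd.1 hs'
          have hex' : ∃ x', (x, x') ∈ S1.rolI R := by
            obtain ⟨t', ht'⟩ := hex
            obtain ⟨x', hx', _⟩ := typD_succ_snd.1 ht'
            exact ⟨x', hx'⟩
          obtain ⟨x', hx', hsim⟩ := hback R y' hex' hy'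
          exact ⟨typD S1 n x', typD_succ_snd.2 ⟨x', hx', rfl⟩, (ih x' y').1 hsim⟩
      · rintro ⟨hA, hforth, hback⟩
        refine ⟨?_, ?_, ?_⟩
        · intro A hmem; exact typD_succ_fst.1 (hA A (typD_succ_fst.2 hmem))
        · intro R x' hx'
          obtain ⟨s', hs', hle⟩ := hforth R (typD S1 n x') (typD_succ_snd.2 ⟨x', hx', rfl⟩)
          obtain ⟨y', hy', hty⟩ := typD_succ_snd.1 hs'
          exact ⟨y', hy', (ih x' y').2 (hty ▸ hle)⟩
        · intro R y' hex hy'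
          obtain ⟨x₀, hx₀⟩ := hex
          have hext : ∃ t', (typD S1 (n + 1) x).2 R t' = true :=
            ⟨typD S1 n x₀, typD_succ_snd.2 ⟨x₀, hx₀, rfl⟩⟩
          obtain ⟨t', ht', hle⟩ := hback R (typD S2 n y') hext (typD_succ_snd.2 ⟨y', hy', rfl⟩)
          obtain ⟨x', hx', rfl⟩ := typD_succ_snd.1 ht'
          exact ⟨x', hx', (ih x' y').2 hle⟩

lemma nablaSimL_atom {S1 : Str Con Rol E} {S2 : Str Con Rol F} {n : ℕ} {x : E} {y : F}
    (h : NablaSimL S1 S2 n x y) : ∀ A, x ∈ S1.conI A → y ∈ S2.conI A := by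
  cases n with
  | zero => exact h
  | succ n => exact h.1

/-- Soundness: `n`-round simulations preserve ELU∇-concepts of depth at most `n`. -/
lemma nablaSimL_sound {S1 : Str Con Rol E} {S2 : Str Con Rol F} {L : ALC Con Rol}
    (hL : L.IsELUNabla) :
    ∀ (n : ℕ) (x : E) (y : F), L.depth ≤ n → NablaSimL S1 S2 n x y →
      x ∈ L.sem S1 → y ∈ L.sem S2 := by
  induction hL with
  | top => intro n x y _ _ _; trivial
  | atomic A => intro n x y _ hsim hx; exact nablaSimL_atom hsim A hx
  | @conj C C' _ _ ihC ihC' =>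
      intro n x y hd hsim hx
      simp only [ALC.sem, Set.mem_inter_iff, ALC.depth, max_le_iff] at hx hd ⊢
      exact ⟨ihC n x y hd.1 hsim hx.1, ihC' n x y hd.2 hsim hx.2⟩
  | @disj C C' _ _ ihC ihC' =>
      intro n x y hd hsim hx
      simp only [ALC.sem, Set.mem_union, ALC.depth, max_le_iff] at hx hd ⊢
      rcases hx with hx | hx
      · exact Or.inl (ihC n x y hd.1 hsim hx)
      · exact Or.inr (ihC' n x y hd.2 hsim hx)
  | @ex R C _ ihC =>
      intro n x y hd hsim hx
      simp only [ALC.depth] at hd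
      obtain ⟨m, rfl⟩ : ∃ m, n = m + 1 := ⟨n - 1, by omega⟩
      obtain ⟨x', hx', hxC⟩ := hx
      obtain ⟨y', hy', hsim'⟩ := hsim.2.1 R x' hx'
      exact ⟨y', hy', ihC m x' y' (by omega) hsim' hxC⟩
  | @nabla R C _ ihC =>
      intro n x y hd hsim hx
      simp only [ALC.depth, max_le_iff] at hd
      obtain ⟨m, rfl⟩ : ∃ m, n = m + 1 := ⟨n - 1, by omega⟩
      obtain ⟨⟨x₀, hx₀, -⟩, hall⟩ := hx
      have hex : ∃ x', (x, x') ∈ S1.rolI R := ⟨x₀, hx₀⟩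
      constructor
      · obtain ⟨y₀, hy₀, -⟩ := hsim.2.1 R x₀ hx₀
        exact ⟨y₀, hy₀, trivial⟩
      · intro y' hy'
        obtain ⟨x', hx', hsim'⟩ := hsim.2.2 R y' hex hy'
        exact ihC m x' y' (by omega) hsim' (hall x' hx')

lemma nablaSimL_of_succ {S1 : Str Con Rol E} {S2 : Str Con Rol F} :
    ∀ (n : ℕ) (x : E) (y : F), NablaSimL S1 S2 (n + 1) x y → NablaSimL S1 S2 n x y := by
  intro n
  induction n with
  | zero => intro x y h; exact h.1
  | succ n ih =>
      rintro x y ⟨hA, hforth, hback⟩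
      refine ⟨hA, ?_, ?_⟩
      · intro R x' hx'
        obtain ⟨y', hy', h⟩ := hforth R x' hx'
        exact ⟨y', hy', ih _ _ h⟩
      · intro R y' hex hy'
        obtain ⟨x', hx', h⟩ := hback R y' hex hy'
        exact ⟨x', hx', ih _ _ h⟩

lemma nablaSimL_mono {S1 : Str Con Rol E} {S2 : Str Con Rol F} {m n : ℕ} (hmn : m ≤ n)
    {x : E} {y : F} (h : NablaSimL S1 S2 n x y) : NablaSimL S1 S2 m x y := by
  induction n with
  | zero => exact (Nat.le_zero.1 hmn) ▸ h
  | succ n ih =>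
      rcases Nat.eq_or_lt_of_le hmn with rfl | hlt
      · exact h
      · exact ih (by omega) (nablaSimL_of_succ n x y h)

lemma nablaSim_to_simL {S1 : Str Con Rol E} {S2 : Str Con Rol F} {x : E} {y : F}
    (h : NablaSim S1 S2 x y) : ∀ n, NablaSimL S1 S2 n x y := by
  obtain ⟨Z, hZ, hxy⟩ := h
  intro n
  suffices hgen : ∀ (x : E) (y : F), (x, y) ∈ Z → NablaSimL S1 S2 n x y from hgen x y hxy
  clear hxy
  induction n with
  | zero => exact fun x y hxy => (hZ x y hxy).1
  | succ n ih =>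
      intro x y hxy
      obtain ⟨hA, hforth, hback⟩ := hZ x y hxy
      refine ⟨hA, ?_, ?_⟩
      · intro R x' hx'
        obtain ⟨y', hy', hmem⟩ := hforth R x' hx'
        exact ⟨y', hy', ih _ _ hmem⟩
      · intro R y' hex hy'
        obtain ⟨x', hx', hmem⟩ := hback R y' hex hy'
        exact ⟨x', hx', ih _ _ hmem⟩

/-! ### Characteristic ELU∇-concepts -/

lemma sem_conj_mem {S : Str Con Rol E} {C D : ALC Con Rol} {x : E} :
    x ∈ (ALC.conj C D).sem S ↔ x ∈ C.sem S ∧ x ∈ D.sem S := Iff.rfl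

lemma sem_ex_mem {S : Str Con Rol E} {R : Rol} {C : ALC Con Rol} {x : E} :
    x ∈ (ALC.ex R C).sem S ↔ ∃ y, (x, y) ∈ S.rolI R ∧ y ∈ C.sem S := Iff.rfl

lemma sem_all_mem {S : Str Con Rol E} {R : Rol} {C : ALC Con Rol} {x : E} :
    x ∈ (ALC.all R C).sem S ↔ ∀ y, (x, y) ∈ S.rolI R → y ∈ C.sem S := Iff.rfl

lemma sem_impl_mem {S : Str Con Rol E} {C D : ALC Con Rol} {x : E} :
    x ∈ (ALC.impl C D).sem S ↔ (x ∈ C.sem S → x ∈ D.sem S) := by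
  simp only [ALC.sem, Set.mem_union, Set.mem_compl_iff]; tauto

def allL (α : Type) [Fintype α] : List α := Finset.univ.toList

lemma mem_allL {α : Type} [Fintype α] (a : α) : a ∈ allL α := by
  simp [allL]

variable [Fintype Con] [Fintype Rol]

def succList {n : ℕ} (t : Ty Con Rol (n + 1)) (R : Rol) : List (Ty Con Rol n) :=
  (allL (Ty Con Rol n)).filter (fun t' => t.2 R t')

lemma mem_succList {n : ℕ} {t : Ty Con Rol (n + 1)} {R : Rol} {t' : Ty Con Rol n} :
    t' ∈ succList t R ↔ t.2 R t' = true := by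
  simp [succList, mem_allL]

def nablaOf (R : Rol) : List (ALC Con Rol) → ALC Con Rol
  | [] => .top
  | C :: l => .conj (.ex R .top) (.all R (l.foldr .disj C))

lemma mem_nablaOf_sem {S : Str Con Rol E} {R : Rol} {l : List (ALC Con Rol)} {x : E} :
    x ∈ (nablaOf R l).sem S ↔
      (l = [] ∨ ((∃ x', (x, x') ∈ S.rolI R) ∧
        ∀ x', (x, x') ∈ S.rolI R → ∃ C ∈ l, x' ∈ C.sem S)) := by
  cases l with
  | nil => simp [nablaOf, ALC.sem]
  | cons C l =>
      simp only [nablaOf, sem_conj_mem, sem_ex_mem, sem_all_mem, List.mem_cons]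
      constructor
      · rintro ⟨⟨x', hx', -⟩, hall⟩
        refine Or.inr ⟨⟨x', hx'⟩, fun y hy => ?_⟩
        rcases mem_foldr_disj.1 (hall y hy) with h | ⟨D, hD, h⟩
        · exact ⟨C, Or.inl rfl, h⟩
        · exact ⟨D, Or.inr hD, h⟩
      · rintro (h | ⟨⟨x', hx'⟩, hall⟩)
        · exact absurd h (List.cons_ne_nil C l)
        · refine ⟨⟨x', hx', trivial⟩, fun y hy => ?_⟩
          rcases hall y hy with ⟨D, (rfl | hD), h⟩
          · exact mem_foldr_disj.2 (Or.inl h)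
          · exact mem_foldr_disj.2 (Or.inr ⟨D, hD, h⟩)

lemma isELU_nablaOf {R : Rol} {l : List (ALC Con Rol)}
    (h : ∀ C ∈ l, ALC.IsELUNabla C) : (nablaOf R l).IsELUNabla := by
  cases l with
  | nil => exact .top
  | cons C l =>
      exact .nabla R (isELU_foldr_disj (h _ (List.mem_cons_self))
        (fun D hD => h _ (List.mem_cons_of_mem _ hD)))

lemma depth_nablaOf_le {R : Rol} {l : List (ALC Con Rol)} {n : ℕ}
    (h : ∀ C ∈ l, ALC.depth C ≤ n) : (nablaOf R l).depth ≤ n + 1 := by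
  cases l with
  | nil => simp [nablaOf, ALC.depth]
  | cons C l =>
      simp only [nablaOf, ALC.depth, max_le_iff]
      refine ⟨by omega, by
        have := depth_foldr_disj_le (h _ (List.mem_cons_self))
          (fun D hD => h _ (List.mem_cons_of_mem _ hD))
        omega⟩

/-- The characteristic concept of a depth-`n` type. -/
def chi : (n : ℕ) → Ty Con Rol n → ALC Con Rol
  | 0 => fun t => bigConj (((allL Con).filter (fun A => t A)).map .atomic)
  | n + 1 => fun t =>
      .conj (bigConj (((allL Con).filter (fun A => t.1 A)).map .atomic))
        (bigConj ((allL Rol).flatMap (fun R =>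
          nablaOf R ((succList t R).map (fun t' => chi n t')) ::
            (succList t R).map (fun t' => .ex R (chi n t')))))

lemma chi_isELU : ∀ (n : ℕ) (t : Ty Con Rol n), (chi n t).IsELUNabla := by
  intro n
  induction n with
  | zero =>
      intro t
      refine isELU_bigConj fun C hC => ?_
      obtain ⟨A, -, rfl⟩ := List.mem_map.1 hC
      exact .atomic A
  | succ n ih =>
      intro t
      refine .conj (isELU_bigConj fun C hC => ?_) (isELU_bigConj fun C hC => ?_)
      · obtain ⟨A, -, rfl⟩ := List.mem_map.1 hC
        exact .atomic A
      · obtain ⟨R, -, hmem⟩ := List.mem_flatMap.1 hC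
        rcases List.mem_cons.1 hmem with rfl | hmem'
        · refine isELU_nablaOf fun D hD => ?_
          obtain ⟨t', -, rfl⟩ := List.mem_map.1 hD
          exact ih t'
        · obtain ⟨t', -, rfl⟩ := List.mem_map.1 hmem'
          exact .ex R (ih t')

lemma chi_depth : ∀ (n : ℕ) (t : Ty Con Rol n), (chi n t).depth ≤ n := by
  intro n
  induction n with
  | zero =>
      intro t
      refine depth_bigConj_le fun C hC => ?_
      obtain ⟨A, -, rfl⟩ := List.mem_map.1 hC
      simp [ALC.depth]
  | succ n ih =>
      intro t
      simp only [chi, ALC.depth, max_le_iff]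
      constructor
      · refine le_trans (depth_bigConj_le (n := 0) fun C hC => ?_) (by omega)
        obtain ⟨A, -, rfl⟩ := List.mem_map.1 hC
        simp [ALC.depth]
      · refine depth_bigConj_le fun C hC => ?_
        obtain ⟨R, -, hmem⟩ := List.mem_flatMap.1 hC
        rcases List.mem_cons.1 hmem with rfl | hmem'
        · refine depth_nablaOf_le fun D hD => ?_
          obtain ⟨t', -, rfl⟩ := List.mem_map.1 hD
          exact ih t'
        · obtain ⟨t', -, rfl⟩ := List.mem_map.1 hmem'
          simpa [ALC.depth] using ih t'

lemma chi_sem {S : Str Con Rol E} :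
    ∀ (n : ℕ) (t : Ty Con Rol n) (x : E),
      x ∈ (chi n t).sem S ↔ tyLe n t (typD S n x) := by
  intro n
  induction n with
  | zero =>
      intro t x
      rw [tyLe_zero]
      simp only [chi, mem_bigConj, List.mem_map, List.mem_filter]
      constructor
      · intro h A hA
        exact typD_zero_eq.2 (h (.atomic A) ⟨A, ⟨mem_allL A, hA⟩, rfl⟩)
      · rintro h C ⟨A, ⟨-, hA⟩, rfl⟩
        exact typD_zero_eq.1 (h A hA)
  | succ n ih =>
      intro t x
      rw [tyLe_succ]
      constructor
      · intro hx
        simp only [chi, sem_conj_mem, mem_bigConj] at hx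
        have hatom : ∀ A, t.1 A = true → x ∈ S.conI A := fun A hA =>
          hx.1 (.atomic A) (List.mem_map.2 ⟨A, List.mem_filter.2 ⟨mem_allL A, hA⟩, rfl⟩)
        have hnabla : ∀ R : Rol,
            x ∈ (nablaOf R ((succList t R).map (fun t' => chi n t'))).sem S := fun R =>
          hx.2 _ (List.mem_flatMap.2 ⟨R, mem_allL R, List.mem_cons_self⟩)
        have hexs : ∀ (R : Rol) (t' : Ty Con Rol n), t' ∈ succList t R →
            ∃ x', (x, x') ∈ S.rolI R ∧ x' ∈ (chi n t').sem S := by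
          intro R t' ht'
          exact sem_ex_mem.1 (hx.2 (.ex R (chi n t')) (List.mem_flatMap.2
            ⟨R, mem_allL R, List.mem_cons_of_mem _ (List.mem_map.2 ⟨t', ht', rfl⟩)⟩))
        refine ⟨fun A hA => typD_succ_fst.2 (hatom A hA), ?_, ?_⟩
        · intro R t' ht'
          obtain ⟨x', hx', hchi⟩ := hexs R t' (mem_succList.2 ht')
          exact ⟨typD S n x', typD_succ_snd.2 ⟨x', hx', rfl⟩, (ih t' x').1 hchi⟩
        · intro R s' htex hs'
          obtain ⟨x', hx', rfl⟩ := typD_succ_snd.1 hs'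
          have hnb := mem_nablaOf_sem.1 (hnabla R)
          rcases hnb with hemp | ⟨-, hall⟩
          · obtain ⟨t', ht'⟩ := htex
            have : t' ∈ succList t R := mem_succList.2 ht'
            rw [List.map_eq_nil_iff] at hemp
            simp [hemp] at this
            exact absurd this List.not_mem_nil
          · obtain ⟨C, hC, hx'C⟩ := hall x' hx'
            obtain ⟨t', ht', rfl⟩ := List.mem_map.1 hC
            exact ⟨t', mem_succList.1 ht', (ih t' x').1 hx'C⟩
      · rintro ⟨hatom, hforth, hback⟩
        simp only [chi, sem_conj_mem, mem_bigConj]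
        constructor
        · intro C hC
          obtain ⟨A, hA, rfl⟩ := List.mem_map.1 hC
          exact typD_succ_fst.1 (hatom A (List.mem_filter.1 hA).2)
        · intro C hC
          obtain ⟨R, -, hmem⟩ := List.mem_flatMap.1 hC
          rcases List.mem_cons.1 hmem with rfl | hmem'
          · rw [mem_nablaOf_sem]
            cases hsl : succList t R with
            | nil => left; simp [hsl]
            | cons t₀ ts =>
                right
                have ht₀ : t.2 R t₀ = true :=
                  mem_succList.1 (by rw [hsl]; exact List.mem_cons_self)
                obtain ⟨s₀, hs₀, -⟩ := hforth R t₀ ht₀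
                obtain ⟨x₀, hx₀, -⟩ := typD_succ_snd.1 hs₀
                refine ⟨⟨x₀, hx₀⟩, fun x' hx' => ?_⟩
                obtain ⟨t', ht', hle⟩ :=
                  hback R (typD S n x') ⟨t₀, ht₀⟩ (typD_succ_snd.2 ⟨x', hx', rfl⟩)
                have htm : t' ∈ t₀ :: ts := by
                  rw [← hsl]; exact mem_succList.2 ht'
                exact ⟨chi n t', List.mem_map.2 ⟨t', htm, rfl⟩, (ih t' x').2 hle⟩
          · obtain ⟨t', ht', rfl⟩ := List.mem_map.1 hmem'
            obtain ⟨s', hs', hle⟩ := hforth R t' (mem_succList.1 ht')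
            obtain ⟨x', hx', rfl⟩ := typD_succ_snd.1 hs'
            exact sem_ex_mem.2 ⟨x', hx', (ih t' x').2 hle⟩

/-! ### Decomposition of ELU∇-concepts into characteristic concepts -/

def selSet (n : ℕ) (L : ALC Con Rol) : Finset (Ty Con Rol n) :=
  Finset.univ.filter (fun t => ∀ (G : Type) (S : Str Con Rol G) (x : G),
    tyLe n t (typD S n x) → x ∈ L.sem S)

lemma mem_selSet {n : ℕ} {L : ALC Con Rol} {t : Ty Con Rol n} :
    t ∈ selSet n L ↔ ∀ (G : Type) (S : Str Con Rol G) (x : G),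
      tyLe n t (typD S n x) → x ∈ L.sem S := by
  simp [selSet]

lemma elu_decomp {L : ALC Con Rol} (hL : L.IsELUNabla) {n : ℕ} (hd : L.depth ≤ n)
    {S : Str Con Rol E} {x : E} :
    x ∈ L.sem S ↔ ∃ t ∈ selSet n L, tyLe n t (typD S n x) := by
  constructor
  · intro hx
    refine ⟨typD S n x, mem_selSet.2 ?_, tyLe_refl n _⟩
    intro G S' x' hle
    exact nablaSimL_sound hL n x x' hd ((nablaSimL_iff_tyLe n x x').2 hle) hx
  · rintro ⟨t, ht, hle⟩
    exact mem_selSet.1 ht _ S x hle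

/-! ### Normal forms for hornALC∇-concepts -/

def mkBasics (n : ℕ) (rl : List (ALC Con Rol)) : List (ALC Con Rol) :=
  (allL (Ty Con Rol n)).flatMap (fun t => rl.map (fun B => .impl (chi n t) B))

def rhsList : (n : ℕ) → List (ALC Con Rol)
  | 0 => .bot :: (allL Con).map .atomic
  | n + 1 =>
      .bot :: ((allL Con).map .atomic ++
        (allL Rol).flatMap (fun R =>
          (mkBasics n (rhsList n)).sublists.flatMap (fun Fs =>
            [.ex R (bigConj Fs), .all R (bigConj Fs)])))

def basics (n : ℕ) : List (ALC Con Rol) := mkBasics n (rhsList n)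

lemma mem_basics_iff {n : ℕ} {D : ALC Con Rol} :
    D ∈ basics n ↔ ∃ t B, B ∈ rhsList n ∧ D = .impl (chi n t) B := by
  constructor
  · intro h
    obtain ⟨t, -, hmem⟩ := List.mem_flatMap.1 (by simpa only [basics, mkBasics] using h)
    obtain ⟨B, hB, hEq⟩ := List.mem_map.1 hmem
    exact ⟨t, B, hB, hEq.symm⟩
  · rintro ⟨t, B, hB, rfl⟩
    simp only [basics, mkBasics]
    exact List.mem_flatMap.2 ⟨t, mem_allL t, List.mem_map.2 ⟨B, hB, rfl⟩⟩

lemma mem_basics_of {n : ℕ} (t : Ty Con Rol n) {B : ALC Con Rol} (hB : B ∈ rhsList n) :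
    (ALC.impl (chi n t) B) ∈ basics n := mem_basics_iff.2 ⟨t, B, hB, rfl⟩

lemma bot_mem_rhs (n : ℕ) : (.bot : ALC Con Rol) ∈ rhsList n := by
  cases n <;> simp [rhsList]

lemma atomic_mem_rhs (n : ℕ) (A : Con) : (.atomic A : ALC Con Rol) ∈ rhsList n := by
  cases n <;> simp [rhsList, mem_allL]

lemma ex_mem_rhs {m : ℕ} (R : Rol) {Fs : List (ALC Con Rol)} (h : Fs.Sublist (basics m)) :
    (.ex R (bigConj Fs) : ALC Con Rol) ∈ rhsList (m + 1) := by
  simp only [rhsList, List.mem_cons, List.mem_append, List.mem_flatMap, List.mem_sublists]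
  exact Or.inr (Or.inr ⟨R, mem_allL R, Fs, h, by simp [basics]⟩)

lemma all_mem_rhs {m : ℕ} (R : Rol) {Fs : List (ALC Con Rol)} (h : Fs.Sublist (basics m)) :
    (.all R (bigConj Fs) : ALC Con Rol) ∈ rhsList (m + 1) := by
  simp only [rhsList, List.mem_cons, List.mem_append, List.mem_flatMap, List.mem_sublists]
  exact Or.inr (Or.inr ⟨R, mem_allL R, Fs, h, by simp [basics]⟩)

lemma rhs_horn : ∀ n, ∀ B ∈ rhsList (Con := Con) (Rol := Rol) n, B.IsHornNabla := by
  intro n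
  induction n with
  | zero =>
      intro B hB
      rcases List.mem_cons.1 hB with rfl | hB'
      · exact .bot
      · obtain ⟨A, -, rfl⟩ := List.mem_map.1 hB'
        exact .atomic A
  | succ n ih =>
      intro B hB
      rcases List.mem_cons.1 hB with rfl | hB'
      · exact .bot
      rcases List.mem_append.1 hB' with hB'' | hB''
      · obtain ⟨A, -, rfl⟩ := List.mem_map.1 hB''
        exact .atomic A
      · obtain ⟨R, -, hFs⟩ := List.mem_flatMap.1 hB''
        obtain ⟨Fs, hFs', hmem⟩ := List.mem_flatMap.1 hFs
        have hFsb : ∀ D ∈ Fs, ALC.IsHornNabla D := by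
          intro D hD
          have : D ∈ basics n := (List.mem_sublists.1 hFs').subset hD
          obtain ⟨t, B', hB', rfl⟩ := mem_basics_iff.1 this
          exact .impl (chi_isELU n t) (ih B' hB')
        rcases List.mem_cons.1 hmem with rfl | hmem'
        · exact .ex R (isHorn_bigConj hFsb)
        rcases List.mem_cons.1 hmem' with rfl | h
        · exact .all R (isHorn_bigConj hFsb)
        · exact absurd h List.not_mem_nil

lemma basics_horn {n : ℕ} : ∀ D ∈ basics (Con := Con) (Rol := Rol) n, D.IsHornNabla := by
  intro D hD
  obtain ⟨t, B, hB, rfl⟩ := mem_basics_iff.1 hD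
  exact .impl (chi_isELU n t) (rhs_horn n B hB)

lemma rhs_depth : ∀ n, ∀ B ∈ rhsList (Con := Con) (Rol := Rol) n, B.depth ≤ n := by
  intro n
  induction n with
  | zero =>
      intro B hB
      rcases List.mem_cons.1 hB with rfl | hB'
      · simp [ALC.depth]
      · obtain ⟨A, -, rfl⟩ := List.mem_map.1 hB'
        simp [ALC.depth]
  | succ n ih =>
      intro B hB
      rcases List.mem_cons.1 hB with rfl | hB'
      · simp [ALC.depth]
      rcases List.mem_append.1 hB' with hB'' | hB''
      · obtain ⟨A, -, rfl⟩ := List.mem_map.1 hB''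
        simp [ALC.depth]
      · obtain ⟨R, -, hFs⟩ := List.mem_flatMap.1 hB''
        obtain ⟨Fs, hFs', hmem⟩ := List.mem_flatMap.1 hFs
        have hFsb : (bigConj Fs).depth ≤ n := by
          refine depth_bigConj_le fun D hD => ?_
          have : D ∈ basics n := (List.mem_sublists.1 hFs').subset hD
          obtain ⟨t, B', hB', rfl⟩ := mem_basics_iff.1 this
          simp only [ALC.depth, max_le_iff]
          exact ⟨chi_depth n t, ih B' hB'⟩
        rcases List.mem_cons.1 hmem with rfl | hmem'
        · simp only [ALC.depth]; omega
        rcases List.mem_cons.1 hmem' with rfl | h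
        · simp only [ALC.depth]; omega
        · exact absurd h List.not_mem_nil

lemma basics_depth {n : ℕ} : ∀ D ∈ basics (Con := Con) (Rol := Rol) n, D.depth ≤ n := by
  intro D hD
  obtain ⟨t, B, hB, rfl⟩ := mem_basics_iff.1 hD
  simp only [ALC.depth, max_le_iff]
  exact ⟨chi_depth n t, rhs_depth n B hB⟩

def implLhs : ALC Con Rol → ALC Con Rol
  | .impl L _ => L
  | C => C

def implRhs : ALC Con Rol → ALC Con Rol
  | .impl _ B => B
  | C => C

lemma forall_impl_iff {n : ℕ} {G : Type} {S : Str Con Rol G} {x : G} {B : ALC Con Rol} :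
    (∀ D ∈ (allL (Ty Con Rol n)).map (fun t => ALC.impl (chi n t) B), x ∈ D.sem S) ↔
      x ∈ B.sem S := by
  constructor
  · intro h
    exact sem_impl_mem.1 (h _ (List.mem_map.2 ⟨typD S n x, mem_allL _, rfl⟩))
      ((chi_sem n _ x).2 (tyLe_refl n _))
  · intro hB D hD
    obtain ⟨t, -, rfl⟩ := List.mem_map.1 hD
    exact sem_impl_mem.2 fun _ => hB

/-- Every hornALC∇-concept of depth at most `n` is equivalent (in every structure)
to a conjunction of concepts from `basics n`. -/
lemma horn_normal_form {C : ALC Con Rol} (hC : C.IsHornNabla) :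
    ∀ n, C.depth ≤ n → ∃ Fs : List (ALC Con Rol), (∀ D ∈ Fs, D ∈ basics n) ∧
      ∀ (G : Type) (S : Str Con Rol G) (x : G), (x ∈ C.sem S ↔ ∀ D ∈ Fs, x ∈ D.sem S) := by
  induction hC with
  | bot =>
      intro n _
      refine ⟨(allL (Ty Con Rol n)).map (fun t => .impl (chi n t) .bot), ?_, ?_⟩
      · intro D hD
        obtain ⟨t, -, rfl⟩ := List.mem_map.1 hD
        exact mem_basics_of t (bot_mem_rhs n)
      · intro G S x
        rw [forall_impl_iff]
  | top =>
      intro n _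
      exact ⟨[], by simp, by intro G S x; simp [ALC.sem]⟩
  | atomic A =>
      intro n _
      refine ⟨(allL (Ty Con Rol n)).map (fun t => .impl (chi n t) (.atomic A)), ?_, ?_⟩
      · intro D hD
        obtain ⟨t, -, rfl⟩ := List.mem_map.1 hD
        exact mem_basics_of t (atomic_mem_rhs n A)
      · intro G S x
        rw [forall_impl_iff]
  | conj h1 h2 ih1 ih2 =>
      intro n hd
      simp only [ALC.depth, max_le_iff] at hd
      obtain ⟨Fs1, hFs1, hiff1⟩ := ih1 n hd.1
      obtain ⟨Fs2, hFs2, hiff2⟩ := ih2 n hd.2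
      refine ⟨Fs1 ++ Fs2, ?_, ?_⟩
      · intro D hD
        rcases List.mem_append.1 hD with h | h
        · exact hFs1 D h
        · exact hFs2 D h
      · intro G S x
        rw [sem_conj_mem, hiff1 G S x, hiff2 G S x]
        constructor
        · rintro ⟨ha, hb⟩ D hD
          rcases List.mem_append.1 hD with h | h
          · exact ha D h
          · exact hb D h
        · intro h
          exact ⟨fun D hD => h D (List.mem_append.2 (Or.inl hD)),
            fun D hD => h D (List.mem_append.2 (Or.inr hD))⟩
  | @impl L H hL hH ihH =>
      intro n hd
      simp only [ALC.depth, max_le_iff] at hd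
      obtain ⟨Fs, hFs, hiff⟩ := ihH n hd.2
      refine ⟨Fs.flatMap (fun D =>
        (selSet n (.conj L (implLhs D))).toList.map
          (fun t' => .impl (chi n t') (implRhs D))), ?_, ?_⟩
      · intro D' hD'
        obtain ⟨D, hD, hmem⟩ := List.mem_flatMap.1 hD'
        obtain ⟨t', -, rfl⟩ := List.mem_map.1 hmem
        obtain ⟨t, B, hB, rfl⟩ := mem_basics_iff.1 (hFs D hD)
        exact mem_basics_of t' (by simpa [implRhs] using hB)
      · intro G S x
        rw [sem_impl_mem]
        constructor
        · intro h D' hD'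
          obtain ⟨D, hD, hmem⟩ := List.mem_flatMap.1 hD'
          obtain ⟨t', ht', rfl⟩ := List.mem_map.1 hmem
          obtain ⟨t, B, hB, rfl⟩ := mem_basics_iff.1 (hFs D hD)
          rw [Finset.mem_toList] at ht'
          simp only [implLhs, implRhs] at ht' ⊢
          rw [sem_impl_mem]
          intro hchi
          have hconj : x ∈ (ALC.conj L (chi n t)).sem S :=
            mem_selSet.1 ht' G S x ((chi_sem n t' x).1 hchi)
          have hH' : x ∈ H.sem S := h hconj.1
          exact sem_impl_mem.1 ((hiff G S x).1 hH' _ hD) hconj.2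
        · intro h hxL
          rw [hiff G S x]
          intro D hD
          obtain ⟨t, B, hB, rfl⟩ := mem_basics_iff.1 (hFs D hD)
          rw [sem_impl_mem]
          intro hchit
          have hconj : x ∈ (ALC.conj L (chi n t)).sem S := ⟨hxL, hchit⟩
          have hdec := (elu_decomp (L := .conj L (chi n t))
            (.conj hL (chi_isELU n t))
            (by simp only [ALC.depth, max_le_iff]; exact ⟨hd.1, chi_depth n t⟩)
            (S := S) (x := x)).1 hconj
          obtain ⟨t', ht', hle⟩ := hdec
          have hx' := h (.impl (chi n t') B) (List.mem_flatMap.2 ⟨.impl (chi n t) B, hD,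
            List.mem_map.2 ⟨t', by
              rw [Finset.mem_toList]
              simpa [implLhs] using ht', by simp [implRhs]⟩⟩)
          exact sem_impl_mem.1 hx' ((chi_sem n t' x).2 hle)
  | @ex R H hH ihH =>
      intro n hd
      simp only [ALC.depth] at hd
      obtain ⟨m, rfl⟩ : ∃ m, n = m + 1 := ⟨n - 1, by omega⟩
      obtain ⟨Fs, hFs, hiff⟩ := ihH m (by omega)
      set Fs' := (basics (Con := Con) (Rol := Rol) m).filter (fun D => decide (D ∈ Fs)) with hFs'def
      have hsub : Fs'.Sublist (basics m) := List.filter_sublist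
      have hmemFs' : ∀ D, D ∈ Fs' ↔ (D ∈ basics m ∧ D ∈ Fs) := by
        intro D
        simp [hFs'def, List.mem_filter]
      have hsame : ∀ (G : Type) (S : Str Con Rol G) (y : G),
          y ∈ (bigConj Fs').sem S ↔ ∀ D ∈ Fs, y ∈ D.sem S := by
        intro G S y
        rw [mem_bigConj]
        constructor
        · intro h D hD
          exact h D ((hmemFs' D).2 ⟨hFs D hD, hD⟩)
        · intro h D hD
          exact h D ((hmemFs' D).1 hD).2
      refine ⟨(allL (Ty Con Rol (m + 1))).map
        (fun t => .impl (chi (m + 1) t) (.ex R (bigConj Fs'))), ?_, ?_⟩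
      · intro D hD
        obtain ⟨t, -, rfl⟩ := List.mem_map.1 hD
        exact mem_basics_of t (ex_mem_rhs R hsub)
      · intro G S x
        rw [forall_impl_iff, sem_ex_mem, sem_ex_mem]
        constructor
        · rintro ⟨y, hy, hyH⟩
          exact ⟨y, hy, mem_bigConj.2 fun D hD =>
            (hiff G S y).1 hyH D ((hmemFs' D).1 hD).2⟩
        · rintro ⟨y, hy, hyC⟩
          exact ⟨y, hy, (hiff G S y).2 ((hsame G S y).1 hyC)⟩
  | @all R H hH ihH =>
      intro n hd
      simp only [ALC.depth] at hd
      obtain ⟨m, rfl⟩ : ∃ m, n = m + 1 := ⟨n - 1, by omega⟩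
      obtain ⟨Fs, hFs, hiff⟩ := ihH m (by omega)
      set Fs' := (basics (Con := Con) (Rol := Rol) m).filter (fun D => decide (D ∈ Fs)) with hFs'def
      have hsub : Fs'.Sublist (basics m) := List.filter_sublist
      have hmemFs' : ∀ D, D ∈ Fs' ↔ (D ∈ basics m ∧ D ∈ Fs) := by
        intro D
        simp [hFs'def, List.mem_filter]
      have hsame : ∀ (G : Type) (S : Str Con Rol G) (y : G),
          y ∈ (bigConj Fs').sem S ↔ ∀ D ∈ Fs, y ∈ D.sem S := by
        intro G S y
        rw [mem_bigConj]
        constructor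
        · intro h D hD
          exact h D ((hmemFs' D).2 ⟨hFs D hD, hD⟩)
        · intro h D hD
          exact h D ((hmemFs' D).1 hD).2
      refine ⟨(allL (Ty Con Rol (m + 1))).map
        (fun t => .impl (chi (m + 1) t) (.all R (bigConj Fs'))), ?_, ?_⟩
      · intro D hD
        obtain ⟨t, -, rfl⟩ := List.mem_map.1 hD
        exact mem_basics_of t (all_mem_rhs R hsub)
      · intro G S x
        rw [forall_impl_iff, sem_all_mem, sem_all_mem]
        constructor
        · intro h y hy
          exact (hsame G S y).2 ((hiff G S y).1 (h y hy))
        · intro h y hy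
          exact (hiff G S y).2 ((hsame G S y).1 (h y hy))

/-! ### The bounded Ehrenfeucht–Fraïssé theorem -/

variable {M : Str Con Rol E} {N : Str Con Rol F}

/-- `X` Horn-depth-`n` entails `b`. -/
def presH (M : Str Con Rol E) (N : Str Con Rol F) (n : ℕ) (X : Set E) (b : F) : Prop :=
  ∀ C : ALC Con Rol, C.IsHornNabla → C.depth ≤ n → X ⊆ C.sem M → b ∈ C.sem N

lemma presH_nonempty {n : ℕ} {X : Set E} {b : F} (h : presH M N n X b) : X.Nonempty := by
  by_contra hne
  rw [Set.not_nonempty_iff_eq_empty] at hne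
  exact h .bot .bot (by simp [ALC.depth]) (by simp [hne])

lemma not_presH_basic {n : ℕ} {X : Set E} {b : F} (h : ¬ presH M N n X b) :
    ∃ D ∈ basics (Con := Con) (Rol := Rol) n, X ⊆ D.sem M ∧ b ∉ D.sem N := by
  rw [presH] at h
  push_neg at h
  obtain ⟨C, hC, hd, hsub, hnb⟩ := h
  obtain ⟨Fs, hFs, hiff⟩ := horn_normal_form hC n hd
  have hne : ¬ ∀ D ∈ Fs, b ∈ D.sem N := fun hall => hnb ((hiff F N b).2 hall)
  push_neg at hne
  obtain ⟨D, hD, hnbD⟩ := hne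
  exact ⟨D, hFs D hD, fun a ha => (hiff E M a).1 (hsub ha) D hD, hnbD⟩

lemma hornSimL_zero {X : Set E} {b : F} :
    HornNablaSimL M N 0 X b ↔
      X.Nonempty ∧ (∀ A, X ⊆ M.conI A → b ∈ N.conI A) ∧
        ∀ a ∈ X, NablaSimL N M 0 b a := Iff.rfl

lemma hornSimL_succ {n : ℕ} {X : Set E} {b : F} :
    HornNablaSimL M N (n + 1) X b ↔
      (X.Nonempty ∧ (∀ A, X ⊆ M.conI A → b ∈ N.conI A) ∧ ∀ a ∈ X, NablaSimL N M 0 b a) ∧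
      (∀ R Y, relUp (M.rolI R) X Y →
          ∃ Y', Y' ⊆ Y ∧ ∃ b', (b, b') ∈ N.rolI R ∧ HornNablaSimL M N n Y' b') ∧
      (∀ R b', (b, b') ∈ N.rolI R →
          ∃ Y, relDown (M.rolI R) X Y ∧ HornNablaSimL M N n Y b') ∧
      (∀ a ∈ X, NablaSimL N M (n + 1) b a) := Iff.rfl

/-- Completeness half of the bounded EF theorem. -/
lemma pred_to_hornSimL :
    ∀ (n : ℕ) (X : Set E) (b : F), presH M N n X b → (∀ a ∈ X, NablaSimL N M n b a) →
      HornNablaSimL M N n X b := by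
  intro n
  induction n with
  | zero =>
      intro X b hp hs
      exact hornSimL_zero.2 ⟨presH_nonempty hp,
        fun A hXA => hp (.atomic A) (.atomic A) (by simp [ALC.depth]) hXA, hs⟩
  | succ n ih =>
      intro X b hp hs
      refine hornSimL_succ.2 ⟨⟨presH_nonempty hp,
        fun A hXA => hp (.atomic A) (.atomic A) (by simp [ALC.depth]) hXA,
        fun a ha => nablaSimL_mono (Nat.zero_le _) (hs a ha)⟩, ?_, ?_, hs⟩
      · -- forth
        intro R Y hup
        set Yt : Ty Con Rol n → Set E := fun t => {y ∈ Y | tyLe n t (typD M n y)} with hYt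
        have main : ∃ b', (b, b') ∈ N.rolI R ∧ presH M N n (Yt (typD N n b')) b' := by
          by_contra hbad
          push_neg at hbad
          set G : Ty Con Rol n → ALC Con Rol := fun t =>
            bigConj ((basics n).filter (fun D => decide (Yt t ⊆ D.sem M))) with hG
          set K : ALC Con Rol := .ex R (bigConj ((allL (Ty Con Rol n)).map
            (fun t => .impl (chi n t) (G t)))) with hK
          have hKhorn : K.IsHornNabla := by
            refine .ex R (isHorn_bigConj ?_)
            intro D hD
            obtain ⟨t, -, rfl⟩ := List.mem_map.1 hD
            refine .impl (chi_isELU n t) (isHorn_bigConj ?_)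
            intro D' hD'
            exact basics_horn D' (List.mem_filter.1 hD').1
          have hKdepth : K.depth ≤ n + 1 := by
            have h1 : (bigConj ((allL (Ty Con Rol n)).map
                (fun t => ALC.impl (chi n t) (G t)))).depth ≤ n := by
              refine depth_bigConj_le fun D hD => ?_
              obtain ⟨t, -, rfl⟩ := List.mem_map.1 hD
              simp only [ALC.depth, max_le_iff]
              refine ⟨chi_depth n t, depth_bigConj_le fun D' hD' => ?_⟩
              exact basics_depth D' (List.mem_filter.1 hD').1
            simp only [hK, ALC.depth]
            omega
          have hXK : X ⊆ K.sem M := by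
            intro a ha
            obtain ⟨y, hyY, hay⟩ := hup a ha
            refine sem_ex_mem.2 ⟨y, hay, mem_bigConj.2 ?_⟩
            intro D hD
            obtain ⟨t, -, rfl⟩ := List.mem_map.1 hD
            refine sem_impl_mem.2 fun hychi => mem_bigConj.2 ?_
            intro D' hD'
            have hsubD : Yt t ⊆ D'.sem M :=
              of_decide_eq_true (List.mem_filter.1 hD').2
            exact hsubD ⟨hyY, (chi_sem n t y).1 hychi⟩
          obtain ⟨b'', hb'', hb''mem⟩ := sem_ex_mem.1 (hp K hKhorn hKdepth hXK)
          obtain ⟨D, hDb, hDsub, hDnot⟩ := not_presH_basic (hbad b'' hb'')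
          have hchib'' : b'' ∈ (chi n (typD N n b'')).sem N :=
            (chi_sem n _ b'').2 (tyLe_refl n _)
          have hGmem := sem_impl_mem.1 (mem_bigConj.1 hb''mem _
            (List.mem_map.2 ⟨typD N n b'', mem_allL _, rfl⟩)) hchib''
          exact hDnot (mem_bigConj.1 hGmem D
            (List.mem_filter.2 ⟨hDb, decide_eq_true hDsub⟩))
        obtain ⟨b', hb', hpres⟩ := main
        refine ⟨Yt (typD N n b'), fun y hy => hy.1, b', hb', ?_⟩
        exact ih _ _ hpres fun y hy => (nablaSimL_iff_tyLe n b' y).2 hy.2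
      · -- back
        intro R b' hb'
        set Y : Set E :=
          {y | (∃ a ∈ X, (a, y) ∈ M.rolI R) ∧ tyLe n (typD N n b') (typD M n y)} with hY
        have hpres : presH M N n Y b' := by
          by_contra hbad
          obtain ⟨D, hDb, hDsub, hDnot⟩ := not_presH_basic hbad
          set K : ALC Con Rol := .all R (.impl (chi n (typD N n b')) D) with hK
          have hKhorn : K.IsHornNabla :=
            .all R (.impl (chi_isELU n _) (basics_horn D hDb))
          have hKdepth : K.depth ≤ n + 1 := by
            have h1 := chi_depth n (typD N n b')
            have h2 := basics_depth D hDb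
            simp only [hK, ALC.depth, max_le_iff]
            omega
          have hXK : X ⊆ K.sem M := by
            intro a ha
            refine sem_all_mem.2 fun y hay => sem_impl_mem.2 fun hychi => ?_
            exact hDsub ⟨⟨a, ha, hay⟩, (chi_sem n _ y).1 hychi⟩
          have hbK := hp K hKhorn hKdepth hXK
          exact hDnot (sem_impl_mem.1 (sem_all_mem.1 hbK b' hb')
            ((chi_sem n _ b').2 (tyLe_refl n _)))
        exact ⟨Y, fun y hy => hy.1,
          ih _ _ hpres fun y hy => (nablaSimL_iff_tyLe n b' y).2 hy.2⟩

lemma hornSimL_nonempty {n : ℕ} {X : Set E} {b : F} (h : HornNablaSimL M N n X b) :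
    X.Nonempty := by
  cases n with
  | zero => exact h.1
  | succ n => exact h.1.1

lemma hornSimL_sim {n : ℕ} {X : Set E} {b : F} (h : HornNablaSimL M N n X b) :
    ∀ a ∈ X, NablaSimL N M n b a := by
  cases n with
  | zero => exact h.2.2
  | succ n => exact h.2.2.2

/-- Soundness half of the bounded EF theorem. -/
lemma hornSimL_sound {C : ALC Con Rol} (hC : C.IsHornNabla) :
    ∀ (n : ℕ) (X : Set E) (b : F), C.depth ≤ n → HornNablaSimL M N n X b →
      X ⊆ C.sem M → b ∈ C.sem N := by
  induction hC with
  | bot =>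
      intro n X b _ hsim hsub
      obtain ⟨a, ha⟩ := hornSimL_nonempty hsim
      exact absurd (hsub ha) (by simp [ALC.sem])
  | top => intro n X b _ _ _; trivial
  | atomic A =>
      intro n X b _ hsim hsub
      cases n with
      | zero => exact hsim.2.1 A hsub
      | succ n => exact hsim.1.2.1 A hsub
  | conj h1 h2 ih1 ih2 =>
      intro n X b hd hsim hsub
      simp only [ALC.depth, max_le_iff] at hd
      exact ⟨ih1 n X b hd.1 hsim (fun a ha => (hsub ha).1),
        ih2 n X b hd.2 hsim (fun a ha => (hsub ha).2)⟩
  | @impl L H hL hH ihH =>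
      intro n X b hd hsim hsub
      simp only [ALC.depth, max_le_iff] at hd
      refine sem_impl_mem.2 fun hbL => ?_
      refine ihH n X b hd.2 hsim fun a ha => ?_
      exact sem_impl_mem.1 (hsub ha)
        (nablaSimL_sound hL n b a hd.1 (hornSimL_sim hsim a ha) hbL)
  | @ex R H hH ihH =>
      intro n X b hd hsim hsub
      simp only [ALC.depth] at hd
      obtain ⟨m, rfl⟩ : ∃ m, n = m + 1 := ⟨n - 1, by omega⟩
      have hup : relUp (M.rolI R) X (H.sem M) := by
        intro a ha
        obtain ⟨y, hay, hyH⟩ := sem_ex_mem.1 (hsub ha)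
        exact ⟨y, hyH, hay⟩
      obtain ⟨Y', hY'sub, b', hb', hsim'⟩ := (hornSimL_succ.1 hsim).2.1 R (H.sem M) hup
      exact sem_ex_mem.2 ⟨b', hb', ihH m Y' b' (by omega) hsim'
        (fun y hy => hY'sub hy)⟩
  | @all R H hH ihH =>
      intro n X b hd hsim hsub
      simp only [ALC.depth] at hd
      obtain ⟨m, rfl⟩ : ∃ m, n = m + 1 := ⟨n - 1, by omega⟩
      refine sem_all_mem.2 fun b' hb' => ?_
      obtain ⟨Y, hdown, hsim'⟩ := (hornSimL_succ.1 hsim).2.2.1 R b' hb'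
      refine ihH m Y b' (by omega) hsim' fun y hy => ?_
      obtain ⟨a, ha, hay⟩ := hdown y hy
      exact sem_all_mem.1 (hsub ha) y hay

/-- The depth-`n` EF theorem. -/
lemma ef_bounded (M : Str Con Rol E) (N : Str Con Rol F) (a : E) (b : F) (n : ℕ) :
    leHornNablaDepth M N n a b ↔ HornNablaSimL M N n {a} b := by
  constructor
  · intro h
    refine pred_to_hornSimL n {a} b ?_ ?_
    · intro C hC hd hsub
      exact h C hC hd (hsub rfl)
    · rintro a' rfl
      have hchi : a' ∈ (chi n (typD N n b)).sem M := by
        by_contra hnot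
        have hmem : a' ∈ (ALC.impl (chi n (typD N n b)) .bot).sem M :=
          sem_impl_mem.2 fun hc => absurd hc hnot
        have hb := h _ (.impl (chi_isELU n _) .bot)
          (by simp only [ALC.depth, max_le_iff]
              exact ⟨chi_depth n _, Nat.zero_le n⟩) hmem
        exact absurd (sem_impl_mem.1 hb ((chi_sem n _ b).2 (tyLe_refl n _)))
          (by simp [ALC.sem])
      exact (nablaSimL_iff_tyLe n b a').2 ((chi_sem n _ a').1 hchi)
  · intro hsim C hC hd ha
    exact hornSimL_sound hC n {a} b hd hsim (Set.singleton_subset_iff.2 ha)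

/-! ### Finite structures: compactness -/

lemma hornSimL_of_succ : ∀ (n : ℕ) (X : Set E) (b : F),
    HornNablaSimL M N (n + 1) X b → HornNablaSimL M N n X b := by
  intro n
  induction n with
  | zero => intro X b h; exact h.1
  | succ n ih =>
      intro X b h
      obtain ⟨hbase, hforth, hback, hsim⟩ := hornSimL_succ.1 h
      refine hornSimL_succ.2 ⟨hbase, ?_, ?_,
        fun a ha => nablaSimL_of_succ _ _ _ (hsim a ha)⟩
      · intro R Y hup
        obtain ⟨Y', hY', b', hb', hs⟩ := hforth R Y hup
        exact ⟨Y', hY', b', hb', ih _ _ hs⟩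
      · intro R b' hb'
        obtain ⟨Y, hY, hs⟩ := hback R b' hb'
        exact ⟨Y, hY, ih _ _ hs⟩

lemma hornSimL_mono {n m : ℕ} (hnm : n ≤ m) {X : Set E} {b : F}
    (h : HornNablaSimL M N m X b) : HornNablaSimL M N n X b := by
  induction m with
  | zero => exact (Nat.le_zero.1 hnm) ▸ h
  | succ m ih =>
      rcases Nat.eq_or_lt_of_le hnm with rfl | hlt
      · exact h
      · exact ih (by omega) (hornSimL_of_succ m X b h)

lemma hornSim_to_simL {X : Set E} {b : F} (h : HornNablaSim M N X b) :
    ∀ n, HornNablaSimL M N n X b := by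
  obtain ⟨Z, hZ, hmem⟩ := h
  intro n
  suffices hgen : ∀ (X : Set E) (b : F), (X, b) ∈ Z → HornNablaSimL M N n X b from
    hgen X b hmem
  clear hmem
  induction n with
  | zero =>
      intro X b hXb
      obtain ⟨hne, hatom, -, -, hsims⟩ := hZ X b hXb
      exact hornSimL_zero.2 ⟨hne, hatom, fun a ha => nablaSim_to_simL (hsims a ha) 0⟩
  | succ n ih =>
      intro X b hXb
      obtain ⟨hne, hatom, hforth, hback, hsims⟩ := hZ X b hXb
      refine hornSimL_succ.2 ⟨⟨hne, hatom,
        fun a ha => nablaSim_to_simL (hsims a ha) 0⟩, ?_, ?_,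
        fun a ha => nablaSim_to_simL (hsims a ha) (n + 1)⟩
      · intro R Y hup
        obtain ⟨Y', hY', b', hb', hmem'⟩ := hforth R Y hup
        exact ⟨Y', hY', b', hb', ih Y' b' hmem'⟩
      · intro R b' hb'
        obtain ⟨Y, hY, hmem'⟩ := hback R b' hb'
        exact ⟨Y, hY, ih Y b' hmem'⟩

lemma exists_forall_of_finite {α : Type} [Finite α] (P : ℕ → α → Prop)
    (hmono : ∀ n m, n ≤ m → ∀ a, P m a → P n a) (h : ∀ n, ∃ a, P n a) :
    ∃ a, ∀ n, P n a := by
  choose f hf using h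
  obtain ⟨a, ha⟩ := Finite.exists_infinite_fiber f
  refine ⟨a, fun n => ?_⟩
  obtain ⟨m, hm, hnm⟩ := (Set.infinite_coe_iff.1 ha).exists_gt n
  have hfm : f m = a := hm
  exact hmono n m (le_of_lt hnm) a (hfm ▸ hf m)

lemma nablaSim_of_allL [Finite E] [Finite F] {S1 : Str Con Rol E} {S2 : Str Con Rol F}
    {x : E} {y : F} (h : ∀ n, NablaSimL S1 S2 n x y) : NablaSim S1 S2 x y := by
  refine ⟨{p : E × F | ∀ n, NablaSimL S1 S2 n p.1 p.2}, ?_, h⟩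
  intro x y hxy
  refine ⟨hxy 0, ?_, ?_⟩
  · intro R x' hx'
    have hex : ∀ n, ∃ y', (y, y') ∈ S2.rolI R ∧ NablaSimL S1 S2 n x' y' := fun n =>
      (hxy (n + 1)).2.1 R x' hx'
    obtain ⟨y', hy'⟩ := exists_forall_of_finite _
      (fun n m hnm y' hp => ⟨hp.1, nablaSimL_mono hnm hp.2⟩) hex
    exact ⟨y', (hy' 0).1, fun n => (hy' n).2⟩
  · intro R y' hexr hy'
    have hex : ∀ n, ∃ x', (x, x') ∈ S1.rolI R ∧ NablaSimL S1 S2 n x' y' := fun n =>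
      (hxy (n + 1)).2.2 R y' hexr hy'
    obtain ⟨x', hx'⟩ := exists_forall_of_finite _
      (fun n m hnm x' hp => ⟨hp.1, nablaSimL_mono hnm hp.2⟩) hex
    exact ⟨x', (hx' 0).1, fun n => (hx' n).2⟩

lemma hornSim_of_allL [Finite E] [Finite F] {X : Set E} {b : F}
    (h : ∀ n, HornNablaSimL M N n X b) : HornNablaSim M N X b := by
  refine ⟨{p : Set E × F | ∀ n, HornNablaSimL M N n p.1 p.2}, ?_, h⟩
  intro X b hXb
  refine ⟨hornSimL_nonempty (hXb 0), (hXb 0).2.1, ?_, ?_, ?_⟩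
  · intro R Y hup
    have hex : ∀ n, ∃ p : Set E × F,
        (p.1 ⊆ Y ∧ (b, p.2) ∈ N.rolI R) ∧ HornNablaSimL M N n p.1 p.2 := by
      intro n
      obtain ⟨Y', hY', b', hb', hs⟩ := (hornSimL_succ.1 (hXb (n + 1))).2.1 R Y hup
      exact ⟨(Y', b'), ⟨hY', hb'⟩, hs⟩
    obtain ⟨p, hp⟩ := exists_forall_of_finite _
      (fun n m hnm p hp => ⟨hp.1, hornSimL_mono hnm hp.2⟩) hex
    exact ⟨p.1, (hp 0).1.1, p.2, (hp 0).1.2, fun n => (hp n).2⟩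
  · intro R b' hb'
    have hex : ∀ n, ∃ Y : Set E, relDown (M.rolI R) X Y ∧ HornNablaSimL M N n Y b' :=
      fun n => (hornSimL_succ.1 (hXb (n + 1))).2.2.1 R b' hb'
    obtain ⟨Y, hY⟩ := exists_forall_of_finite _
      (fun n m hnm Y hp => ⟨hp.1, hornSimL_mono hnm hp.2⟩) hex
    exact ⟨Y, (hY 0).1, fun n => (hY n).2⟩
  · intro a ha
    exact nablaSim_of_allL fun n => hornSimL_sim (hXb n) a ha

end EFAux

end

/-- **Ehrenfeucht–Fraïssé game for hornALC_∇.**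
For any finite vocabulary τ, pointed τ-structures `𝔄,a` and `𝔅,b`, and any `ℓ < ω`:
`𝔄,a ≤^ℓ_{hornALC_∇} 𝔅,b` iff `𝔄,{a} ⪯^ℓ_{horn_∇} 𝔅,b`.  If `𝔄` and `𝔅` are finite,
then `𝔄,a ≤_{hornALC_∇} 𝔅,b` iff `𝔄,{a} ⪯_{horn_∇} 𝔅,b`. -/
theorem hornALCNabla_ef_game {Con Rol : Type} [Fintype Con] [Fintype Rol]
    {D1 D2 : Type} [Nonempty D1] [Nonempty D2]
    (M : Str Con Rol D1) (N : Str Con Rol D2) (a : D1) (b : D2) :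
    (∀ ℓ : ℕ, leHornNablaDepth M N ℓ a b ↔ HornNablaSimL M N ℓ {a} b) ∧
    (Finite D1 → Finite D2 → (leHornNabla M N a b ↔ HornNablaSim M N {a} b)) := by
  refine ⟨fun ℓ => EFAux.ef_bounded M N a b ℓ, fun h1 h2 => ?_⟩
  haveI := h1
  haveI := h2
  constructor
  · intro h
    exact EFAux.hornSim_of_allL fun n =>
      (EFAux.ef_bounded M N a b n).1 fun C hC _ ha => h C hC ha
  · intro h C hC ha
    exact (EFAux.ef_bounded M N a b C.depth).2
      (EFAux.hornSim_to_simL h C.depth) C hC le_rfl ha
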